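/- Let T > 0 and let α, β, λ, ε, μ > 0 satisfy λ ≥ α + εμ/(4β). Let χ : [0,T] → ℝ³ be differentiable, χ̇ₛ : [0,T] → ℝ³, h : ℝ³ × ℝ → ℝ differentiable, and V : [0,T] → ℝ differentiable with V(t) ≥ β‖χ'(t) − χ̇ₛ(t)‖², V'(t) ≤ −λ V(t), and ⟨∇_χ h(χ(t),t), χ̇ₛ(t)⟩ + ∂ₜh(χ(t),t) ≥ −α h(χ(t),t) + (1/ε)‖∇_χ h(χ(t),t)‖² for all t ∈ [0,T]. Then the function B(t) = h(χ(t),t) − (1/μ)V(t) satisfies the differential inequality B'(t) ≥ −α B(t) for all t ∈ [0,T]. -/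

import Mathlib

open scoped RealInnerProductSpace

/-- Chain of inequalities in the proof of Theorem 1: the barrier candidate
`B(t) = h(χ(t),t) − V(t)/μ` satisfies the differential inequality `B'(t) ≥ −α B(t)`
on `[0,T]`. -/
theorem barrier_differential_inequality
    (T α β lam ε μ : ℝ)
    (hT : 0 < T) (hα : 0 < α) (hβ : 0 < β) (hlam : 0 < lam) (hε : 0 < ε) (hμ : 0 < μ)
    (hparam : lam ≥ α + ε * μ / (4 * β))
    (χ χs : ℝ → EuclideanSpace ℝ (Fin 3))
    (h : EuclideanSpace ℝ (Fin 3) × ℝ → ℝ)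
    (V : ℝ → ℝ)
    (hχ : ∀ t ∈ Set.Icc (0 : ℝ) T, DifferentiableAt ℝ χ t)
    (hh : Differentiable ℝ h)
    (hV : ∀ t ∈ Set.Icc (0 : ℝ) T, DifferentiableAt ℝ V t)
    (hVlb : ∀ t ∈ Set.Icc (0 : ℝ) T, V t ≥ β * ‖deriv χ t - χs t‖ ^ 2)
    (hVdecay : ∀ t ∈ Set.Icc (0 : ℝ) T, deriv V t ≤ -lam * V t)
    (hISSf : ∀ t ∈ Set.Icc (0 : ℝ) T,
      ⟪gradient (fun x => h (x, t)) (χ t), χs t⟫ + deriv (fun s => h (χ t, s)) t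
        ≥ -α * h (χ t, t) + (1 / ε) * ‖gradient (fun x => h (x, t)) (χ t)‖ ^ 2)
:
    ∀ t ∈ Set.Icc (0 : ℝ) T,
      deriv (fun s => h (χ s, s) - (1 / μ) * V s) t
        ≥ -α * (h (χ t, t) - (1 / μ) * V t) := by
  intro t ht
  have hχd : HasDerivAt χ (deriv χ t) t := (hχ t ht).hasDerivAt
  have hpair : HasDerivAt (fun s => (χ s, s)) (deriv χ t, 1) t := HasDerivAt.prodMk hχd (hasDerivAt_id t)
  have H1' := HasFDerivAt.comp_hasDerivAt_of_eq t (hh (χ t, t)).hasFDerivAt hpair rfl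
  have H1 : HasDerivAt (fun s => h (χ s, s)) (fderiv ℝ h (χ t, t) (deriv χ t, 1)) t := H1'
  have hpair2 : HasDerivAt (fun s => ((χ t : EuclideanSpace ℝ (Fin 3)), s))
      ((0 : EuclideanSpace ℝ (Fin 3)), 1) t := HasDerivAt.prodMk (hasDerivAt_const t (χ t)) (hasDerivAt_id t)
  have H2' := HasFDerivAt.comp_hasDerivAt_of_eq t (hh (χ t, t)).hasFDerivAt hpair2 rfl
  have H2 : HasDerivAt (fun s => h (χ t, s)) (fderiv ℝ h (χ t, t) (0, 1)) t := H2'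
  have hderiv_t : deriv (fun s => h (χ t, s)) t = fderiv ℝ h (χ t, t) (0, 1) := H2.deriv
  have H3 : HasFDerivAt (fun y => h (y, t))
      ((fderiv ℝ h (χ t, t)).comp (ContinuousLinearMap.inl ℝ _ ℝ)) (χ t) := by
    have hp : HasFDerivAt (fun y : EuclideanSpace ℝ (Fin 3) => (y, t))
        (ContinuousLinearMap.inl ℝ _ ℝ) (χ t) := HasFDerivAt.prodMk (hasFDerivAt_id (χ t)) (hasFDerivAt_const t (χ t))
    exact (hh (χ t, t)).hasFDerivAt.comp (χ t) hp
  have hgrad : ∀ w, ⟪gradient (fun y => h (y, t)) (χ t), w⟫ = fderiv ℝ h (χ t, t) (w, 0) := by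
    intro w
    rw [gradient, H3.fderiv, InnerProductSpace.toDual_symm_apply]
    rfl
  have HB : HasDerivAt (fun s => h (χ s, s) - (1 / μ) * V s)
      (fderiv ℝ h (χ t, t) (deriv χ t, 1) - (1 / μ) * deriv V t) t :=
    H1.sub (((hV t ht).hasDerivAt).const_mul (1 / μ))
  rw [HB.deriv]
  have hsplit : fderiv ℝ h (χ t, t) (deriv χ t, 1)
      = fderiv ℝ h (χ t, t) (deriv χ t - χs t, 0) + fderiv ℝ h (χ t, t) (χs t, 0)
        + fderiv ℝ h (χ t, t) (0, 1) := by
    rw [← map_add, ← map_add]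
    norm_num
  have hISS := hISSf t ht
  rw [hderiv_t] at hISS
  rw [hsplit, ← hgrad, ← hgrad]
  set g := gradient (fun y => h (y, t)) (χ t) with hg
  set w := deriv χ t - χs t with hw
  have hcs : ⟪g, w⟫ ≥ -(‖g‖ * ‖w‖) := by
    have := abs_real_inner_le_norm g w
    cases abs_le.mp this with
    | intro h1 h2 => linarith
  have hyoung : ‖g‖ * ‖w‖ ≤ 1 / ε * ‖g‖ ^ 2 + ε / 4 * ‖w‖ ^ 2 := by
    rw [← sub_nonneg]
    have e : 1 / ε * ‖g‖ ^ 2 + ε / 4 * ‖w‖ ^ 2 - ‖g‖ * ‖w‖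
        = (1 / (4 * ε)) * ((2 * ‖g‖ - ε * ‖w‖) ^ 2) := by
      field_simp; ring
    rw [e]
    positivity
  have hVd := hVdecay t ht
  have hVl := hVlb t ht
  have hV0 : 0 ≤ V t := le_trans (by positivity) hVl
  have hb2 : ‖w‖ ^ 2 ≤ V t / β := (le_div_iff₀ hβ).mpr (by linarith)
  have step : ε / 4 * ‖w‖ ^ 2 ≤ ε / (4 * β) * V t := by
    calc ε / 4 * ‖w‖ ^ 2 ≤ ε / 4 * (V t / β) :=
          mul_le_mul_of_nonneg_left hb2 (by positivity)
      _ = ε / (4 * β) * V t := by ring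
  have hkey : 1 / μ * lam ≥ 1 / μ * α + ε / (4 * β) := by
    rw [ge_iff_le, ← sub_nonneg] at hparam ⊢
    have h1 : 0 ≤ 1 / μ * (lam - (α + ε * μ / (4 * β))) := by positivity
    have e : 1 / μ * (lam - (α + ε * μ / (4 * β))) = 1 / μ * lam - (1 / μ * α + ε / (4 * β)) := by
      field_simp
    linarith [e ▸ h1]
  have hkeyV : 1 / μ * lam * V t ≥ (1 / μ * α + ε / (4 * β)) * V t :=
    mul_le_mul_of_nonneg_right hkey hV0
  have hVdμ : 1 / μ * deriv V t ≤ 1 / μ * (-lam * V t) :=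
    mul_le_mul_of_nonneg_left hVd (by positivity)
  have e2 : 1 / μ * (-lam * V t) = -(1 / μ * lam * V t) := by ring
  have e3 : (1 / μ * α + ε / (4 * β)) * V t = 1 / μ * α * V t + ε / (4 * β) * V t := by ring
  nlinarith [hcs, hyoung, hISS, step, hkeyV, hVdμ]
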